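/- Let G be a 1-tough graph on at least three vertices with no 2-factor, and let (A,B) be a biased barrier of G. Then there exists a component H of G − (A ∪ B) with e(H,B) odd and e(H,B) ≥ 3; that is, ⋃_{t≥1} 𝒞_{2t+1} ≠ ∅. -/

import Mathlib

open SimpleGraph

variable {V : Type*}

/-- The number of (ordered) pairs giving edges between `X` and `Y`;
for disjoint `X`, `Y` this is the number of edges between `X` and `Y`. -/
noncomputable def eB (G : SimpleGraph V) (X Y : Set V) : ℕ :=
  Set.ncard {p : V × V | p.1 ∈ X ∧ p.2 ∈ Y ∧ G.Adj p.1 p.2}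

/-- The vertex set (in `V`) of a connected component of the induced subgraph on `U`. -/
def compSupp (G : SimpleGraph V) (U : Set V)
    (C : (G.induce U).ConnectedComponent) : Set V :=
  Subtype.val '' C.supp

/-- `δ(A,B) = 2|A| - 2|B| + ∑_{v ∈ B} d_{G-A}(v) - o(A,B)`, where `o(A,B)` is the
number of components of `G - (A ∪ B)` sending an odd number of edges to `B`. -/
noncomputable def deltaAB (G : SimpleGraph V) (A B : Set V) : ℤ :=
  2 * A.ncard - 2 * B.ncard + eB G B Aᶜ -
    Nat.card {C : (G.induce (A ∪ B)ᶜ).ConnectedComponent //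
      Odd (eB G (compSupp G (A ∪ B)ᶜ C) B)}

/-- A barrier (Tutte pair) of `G`. -/
def IsBarrier (G : SimpleGraph V) (A B : Set V) : Prop :=
  Disjoint A B ∧ deltaAB G A B ≤ -2

/-- A biased barrier: a barrier maximizing `|A|` and, subject to that, minimizing `|B|`. -/
def IsBiasedBarrier (G : SimpleGraph V) (A B : Set V) : Prop :=
  IsBarrier G A B ∧
    ∀ A' B' : Set V, IsBarrier G A' B' →
      A'.ncard ≤ A.ncard ∧ (A'.ncard = A.ncard → B.ncard ≤ B'.ncard)

/-- A `2`-factor is a `2`-regular spanning subgraph. -/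
def HasTwoFactor (G : SimpleGraph V) : Prop :=
  ∃ H : SimpleGraph V, H ≤ G ∧ ∀ v : V, (H.neighborSet v).ncard = 2

/-- The number of components of `G - S`. -/
noncomputable def numComp (G : SimpleGraph V) (S : Set V) : ℕ :=
  Nat.card ((G.induce Sᶜ).ConnectedComponent)

/-- `G` is `t`-tough: every vertex cut `S` satisfies `|S| ≥ t · c(G - S)`. -/
def Tough (t : ℝ) (G : SimpleGraph V) : Prop :=
  ∀ S : Set V, 2 ≤ numComp G S → t * (numComp G S : ℝ) ≤ (S.ncard : ℝ)

/-- The toughness `τ(G) = min_S |S| / c(G - S)` over vertex cuts `S`. -/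
noncomputable def toughness (G : SimpleGraph V) : ℝ :=
  sInf {r : ℝ | ∃ S : Set V, 2 ≤ numComp G S ∧ r = (S.ncard : ℝ) / (numComp G S : ℝ)}

/-- `G` is `k`-connected. -/
def KConnected (k : ℕ) (G : SimpleGraph V) : Prop :=
  k < Nat.card V ∧ ∀ S : Set V, S.ncard < k → (G.induce Sᶜ).Connected

/-- The independence number `α(G)`. -/
noncomputable def indepNum (G : SimpleGraph V) : ℕ :=
  sSup {n : ℕ | ∃ s : Set V, (∀ u ∈ s, ∀ v ∈ s, ¬ G.Adj u v) ∧ s.ncard = n}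

/-- The minimum degree `δ(G)`. -/
noncomputable def minDeg (G : SimpleGraph V) : ℕ :=
  sInf {d : ℕ | ∃ v : V, (G.neighborSet v).ncard = d}

/-- `H` occurs as an induced subgraph of `G`. -/
def IsInducedCopy {W : Type*} (H : SimpleGraph W) (G : SimpleGraph V) : Prop :=
  ∃ f : W ↪ V, ∀ a b : W, G.Adj (f a) (f b) ↔ H.Adj a b

/-- The disjoint union `P_m ∪ k·P_1` of a path on `m` vertices and `k` isolated vertices. -/
def pathUnion (m k : ℕ) : SimpleGraph (Fin m ⊕ Fin k) where
  Adj a b := ∃ i j : Fin m, a = Sum.inl i ∧ b = Sum.inl j ∧ (pathGraph m).Adj i j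
  symm := by constructor; rintro a b ⟨i, j, rfl, rfl, h⟩; exact ⟨j, i, rfl, rfl, h.symm⟩
  loopless := by
    constructor
    rintro a ⟨i, j, rfl, hj, h⟩
    obtain rfl := Sum.inl.inj hj
    exact (pathGraph m).loopless.irrefl i h

/-- The join `G ∨ H` of two graphs. -/
def joinG {α β : Type*} (G : SimpleGraph α) (H : SimpleGraph β) :
    SimpleGraph (α ⊕ β) where
  Adj x y :=
    match x, y with
    | Sum.inl a, Sum.inl b => G.Adj a b
    | Sum.inr a, Sum.inr b => H.Adj a b
    | _, _ => True
  symm := by constructor; rintro (a | a) (b | b) h <;> simp_all <;> exact h.symm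
  loopless := by constructor; rintro (a | a) h <;> simp_all

/-- `a` disjoint copies of the complete graph `K_b`. -/
def cliquesG (a b : ℕ) : SimpleGraph (Fin a × Fin b) where
  Adj p q := p.1 = q.1 ∧ p.2 ≠ q.2
  symm := by constructor; rintro p q ⟨h1, h2⟩; exact ⟨h1.symm, h2.symm⟩
  loopless := by constructor; rintro p ⟨_, h⟩; exact h rfl

/-- The graph `H_n`: `K_n ∨ (K̄_{2n+1} ∪ K_{2n+1})` together with a perfect matching
between the independent part and the clique part. -/
def Hgraph (n : ℕ) :
    SimpleGraph (Fin n ⊕ (Fin (2 * n + 1) ⊕ Fin (2 * n + 1))) where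
  Adj x y := x ≠ y ∧
    match x, y with
    | Sum.inl _, _ => True
    | _, Sum.inl _ => True
    | Sum.inr (Sum.inl _), Sum.inr (Sum.inl _) => False
    | Sum.inr (Sum.inr _), Sum.inr (Sum.inr _) => True
    | Sum.inr (Sum.inl i), Sum.inr (Sum.inr j) => i = j
    | Sum.inr (Sum.inr i), Sum.inr (Sum.inl j) => i = j
  symm := by
    constructor
    rintro (a | a | a) (b | b | b) ⟨hne, h⟩ <;>
      exact ⟨Ne.symm hne, by simp_all⟩
  loopless := by constructor; rintro x ⟨hne, _⟩; exact hne rfl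


section Aux
variable {V : Type*} [Fintype V] {G : SimpleGraph V} {X Y X₁ X₂ Y₁ Y₂ : Set V}

lemma eB_comm (G : SimpleGraph V) (X Y : Set V) : eB G X Y = eB G Y X := by
  unfold eB
  have h : {p : V × V | p.1 ∈ X ∧ p.2 ∈ Y ∧ G.Adj p.1 p.2} =
      Prod.swap '' {p : V × V | p.1 ∈ Y ∧ p.2 ∈ X ∧ G.Adj p.1 p.2} := by
    ext ⟨a, b⟩
    simp only [Set.mem_setOf_eq, Set.mem_image, Prod.exists, Prod.swap_prod_mk,
      Prod.mk.injEq]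
    constructor
    · rintro ⟨ha, hb, hadj⟩; exact ⟨b, a, ⟨hb, ha, hadj.symm⟩, rfl, rfl⟩
    · rintro ⟨c, d, ⟨hc, hd, hadj⟩, rfl, rfl⟩; exact ⟨hd, hc, hadj.symm⟩
  rw [h, Set.ncard_image_of_injective _ Prod.swap_injective]

lemma eB_union_right (h : Disjoint Y₁ Y₂) :
    eB G X (Y₁ ∪ Y₂) = eB G X Y₁ + eB G X Y₂ := by
  unfold eB
  have h2 : {p : V × V | p.1 ∈ X ∧ p.2 ∈ Y₁ ∪ Y₂ ∧ G.Adj p.1 p.2} =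
      {p : V × V | p.1 ∈ X ∧ p.2 ∈ Y₁ ∧ G.Adj p.1 p.2} ∪
      {p : V × V | p.1 ∈ X ∧ p.2 ∈ Y₂ ∧ G.Adj p.1 p.2} := by
    ext ⟨a, b⟩
    simp only [Set.mem_setOf_eq, Set.mem_union]
    tauto
  have hd : Disjoint {p : V × V | p.1 ∈ X ∧ p.2 ∈ Y₁ ∧ G.Adj p.1 p.2}
      {p : V × V | p.1 ∈ X ∧ p.2 ∈ Y₂ ∧ G.Adj p.1 p.2} := by
    rw [Set.disjoint_left]
    rintro ⟨a, b⟩ ⟨-, hb1, -⟩ ⟨-, hb2, -⟩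
    exact (h.le_bot ⟨hb1, hb2⟩ : _)
  rw [h2, Set.ncard_union_eq hd (Set.toFinite _) (Set.toFinite _)]

lemma eB_union_left (h : Disjoint X₁ X₂) :
    eB G (X₁ ∪ X₂) Y = eB G X₁ Y + eB G X₂ Y := by
  rw [eB_comm, eB_union_right h, eB_comm G Y X₁, eB_comm G Y X₂]

lemma eB_eq_zero_iff : eB G X Y = 0 ↔ ∀ x ∈ X, ∀ y ∈ Y, ¬ G.Adj x y := by
  unfold eB
  rw [Set.ncard_eq_zero (Set.toFinite _), Set.eq_empty_iff_forall_notMem]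
  constructor
  · intro h x hx y hy hadj; exact h (x, y) ⟨hx, hy, hadj⟩
  · rintro h ⟨a, b⟩ ⟨ha, hb, hadj⟩; exact h a ha b hb hadj

lemma eB_self_singleton (v : V) (Y : Set V) : eB G {v} {v} = 0 := by
  rw [eB_eq_zero_iff]
  rintro x rfl y rfl hadj
  exact hadj.ne rfl

lemma eB_mono_right (h : Y₁ ⊆ Y₂) : eB G X Y₁ ≤ eB G X Y₂ := by
  apply Set.ncard_le_ncard _ (Set.toFinite _)
  rintro ⟨a, b⟩ ⟨ha, hb, hadj⟩
  exact ⟨ha, h hb, hadj⟩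

lemma eB_empty_right : eB G X ∅ = 0 := by
  rw [eB_eq_zero_iff]; rintro x - y ⟨⟩

lemma eB_biUnion_right {ι : Type*} (s : Finset ι) (f : ι → Set V)
    (hdisj : ∀ i ∈ s, ∀ j ∈ s, i ≠ j → Disjoint (f i) (f j)) :
    eB G X (⋃ i ∈ s, f i) = ∑ i ∈ s, eB G X (f i) := by
  classical
  induction s using Finset.induction_on with
  | empty => simp [eB_empty_right]
  | insert a s hni ih =>
    rw [Finset.set_biUnion_insert, Finset.sum_insert hni,
      eB_union_right, ih]
    · intro i hi j hj hij
      exact hdisj i (Finset.mem_insert_of_mem hi) j (Finset.mem_insert_of_mem hj) hij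
    · rw [Set.disjoint_left]
      intro x hx hx2
      simp only [Set.mem_iUnion] at hx2
      obtain ⟨i, hi, hxi⟩ := hx2
      exact Set.disjoint_left.mp (hdisj a (Finset.mem_insert_self a s) i
        (Finset.mem_insert_of_mem hi) (fun h => hni (h ▸ hi))) hx hxi
end Aux

section Comp
variable {V : Type*} [Fintype V] {G : SimpleGraph V} {U : Set V}

noncomputable instance compFintype (G : SimpleGraph V) (U : Set V) :
    Fintype (G.induce U).ConnectedComponent := by
  classical exact Fintype.ofFinite _

lemma mem_compSupp {x : V} {C : (G.induce U).ConnectedComponent} :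
    x ∈ compSupp G U C ↔ ∃ h : x ∈ U, (G.induce U).connectedComponentMk ⟨x, h⟩ = C := by
  constructor
  · rintro ⟨⟨y, hy⟩, hmem, rfl⟩
    exact ⟨hy, hmem⟩
  · rintro ⟨h, hc⟩
    exact ⟨⟨x, h⟩, hc, rfl⟩

lemma compSupp_subset (C : (G.induce U).ConnectedComponent) : compSupp G U C ⊆ U := by
  rintro x ⟨⟨y, hy⟩, -, rfl⟩; exact hy

lemma compSupp_nonempty (C : (G.induce U).ConnectedComponent) :
    (compSupp G U C).Nonempty := by
  obtain ⟨⟨x, hx⟩, hc⟩ := C.exists_rep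
  exact ⟨x, mem_compSupp.mpr ⟨hx, hc⟩⟩

lemma compSupp_disjoint {C D : (G.induce U).ConnectedComponent} (h : C ≠ D) :
    Disjoint (compSupp G U C) (compSupp G U D) := by
  rw [Set.disjoint_left]
  rintro x hC hD
  rw [mem_compSupp] at hC hD
  obtain ⟨hx, hc⟩ := hC
  obtain ⟨hx', hd⟩ := hD
  exact h (hc ▸ hd ▸ rfl)

lemma iUnion_compSupp : ⋃ C : (G.induce U).ConnectedComponent, compSupp G U C = U := by
  apply Set.Subset.antisymm
  · exact Set.iUnion_subset fun C => compSupp_subset C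
  · intro x hx
    exact Set.mem_iUnion.mpr ⟨(G.induce U).connectedComponentMk ⟨x, hx⟩,
      mem_compSupp.mpr ⟨hx, rfl⟩⟩

lemma eB_eq_sum_comps (X : Set V) :
    eB G X U = ∑ C : (G.induce U).ConnectedComponent, eB G X (compSupp G U C) := by
  classical
  have h := eB_biUnion_right (G := G) (X := X) (Finset.univ)
    (fun C : (G.induce U).ConnectedComponent => compSupp G U C)
    (fun i _ j _ hij => compSupp_disjoint hij)
  have h2 : (⋃ C ∈ (Finset.univ : Finset (G.induce U).ConnectedComponent),
      compSupp G U C) = U := by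
    simpa using iUnion_compSupp (G := G) (U := U)
  rw [h2] at h
  exact h

/-- end of a walk starting in a closed set stays in it -/
lemma walk_end_mem_of_closed {W : Type*} {H : SimpleGraph W} {S : Set W}
    (hS : ∀ ⦃x y⦄, x ∈ S → H.Adj x y → y ∈ S) :
    ∀ {x y : W}, H.Walk x y → x ∈ S → y ∈ S := by
  intro x y w
  induction w with
  | nil => exact fun h => h
  | cons h p ih => exact fun hx => ih (hS hx h)

lemma supp_subset_of_closed {W : Type*} {H : SimpleGraph W} {S : Set W}
    (hS : ∀ ⦃x y⦄, x ∈ S → H.Adj x y → y ∈ S) {x : W} (hx : x ∈ S) :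
    (H.connectedComponentMk x).supp ⊆ S := by
  intro y hy
  rw [ConnectedComponent.mem_supp_iff, ConnectedComponent.eq] at hy
  obtain ⟨w⟩ := hy.symm
  exact walk_end_mem_of_closed hS w hx
end Comp

section Surgery
variable {V : Type*} [Fintype V] {G : SimpleGraph V} {U : Set V} {v : V}

/-- inclusion homomorphism between induced subgraphs -/
def incHom (G : SimpleGraph V) {U U' : Set V} (h : U ⊆ U') : G.induce U →g G.induce U' :=
  ⟨fun x => ⟨x.1, h x.2⟩, fun hadj => hadj⟩

/-- the lifted component map -/
noncomputable def liftComp (G : SimpleGraph V) (U : Set V) (v : V) :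
    (G.induce U).ConnectedComponent → (G.induce (insert v U)).ConnectedComponent :=
  ConnectedComponent.map (incHom G (Set.subset_insert v U))

/-- the component of `v` in `G[U ∪ {v}]` -/
def vComp (G : SimpleGraph V) (U : Set V) (v : V) :
    (G.induce (insert v U)).ConnectedComponent :=
  (G.induce (insert v U)).connectedComponentMk ⟨v, Set.mem_insert v U⟩

lemma eB_ne_zero_of_adj {X Y : Set V} {x y : V} (hx : x ∈ X) (hy : y ∈ Y)
    (h : G.Adj x y) : eB G X Y ≠ 0 :=
  fun h0 => (eB_eq_zero_iff.mp h0) x hx y hy h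

lemma reachable_liftComp {C : (G.induce U).ConnectedComponent} {y : V} (hy : y ∈ compSupp G U C)
    (hy' : y ∈ insert v U) :
    (G.induce (insert v U)).connectedComponentMk ⟨y, hy'⟩ = liftComp G U v C := by
  rw [mem_compSupp] at hy
  obtain ⟨h, hc⟩ := hy
  rw [← hc, liftComp, ConnectedComponent.map_mk]
  rfl

lemma compSupp_liftComp (hv : v ∉ U) {C : (G.induce U).ConnectedComponent}
    (hC : eB G {v} (compSupp G U C) = 0) :
    compSupp G (insert v U) (liftComp G U v C) = compSupp G U C := by
  apply Set.Subset.antisymm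
  · set S : Set ↥(insert v U) := {z | (z : V) ∈ compSupp G U C} with hS
    have hclosed : ∀ ⦃x y : ↥(insert v U)⦄, x ∈ S → (G.induce (insert v U)).Adj x y → y ∈ S := by
      intro x y hx hadj
      have hGadj : G.Adj (x : V) (y : V) := hadj
      have hxU : (x : V) ∈ compSupp G U C := hx
      obtain ⟨hxm, hxc⟩ := mem_compSupp.mp hxU
      rcases y.2 with hyv | hyU
      · exfalso
        have hvx : G.Adj v (x : V) := by have h2 := hGadj.symm; rwa [hyv] at h2
        exact eB_ne_zero_of_adj (Set.mem_singleton v) hxU hvx hC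
      · have : (G.induce U).Adj ⟨(x:V), hxm⟩ ⟨(y:V), hyU⟩ := hGadj
        have := ConnectedComponent.connectedComponentMk_eq_of_adj this.symm
        show (y : V) ∈ compSupp G U C
        rw [mem_compSupp]
        exact ⟨hyU, by rw [this, hxc]⟩
    obtain ⟨x, hx⟩ := compSupp_nonempty C
    have hxi : x ∈ insert v U := Set.mem_insert_iff.mpr (Or.inr (compSupp_subset C hx))
    have hmk : (G.induce (insert v U)).connectedComponentMk ⟨x, hxi⟩ = liftComp G U v C :=
      reachable_liftComp hx hxi
    rintro z ⟨⟨z', hz'⟩, hzm, rfl⟩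
    rw [ConnectedComponent.mem_supp_iff, ← hmk] at hzm
    have : (⟨z', hz'⟩ : ↥(insert v U)) ∈
        ((G.induce (insert v U)).connectedComponentMk ⟨x, hxi⟩).supp := by
      rw [ConnectedComponent.mem_supp_iff]; exact hzm
    exact supp_subset_of_closed hclosed (show (⟨x, hxi⟩ : ↥(insert v U)) ∈ S from hx) this
  · intro y hy
    have hy' : y ∈ insert v U := Set.mem_insert_iff.mpr (Or.inr (compSupp_subset C hy))
    rw [mem_compSupp]
    exact ⟨hy', reachable_liftComp hy hy'⟩

lemma exists_adj_of_touch {C : (G.induce U).ConnectedComponent}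
    (hC : eB G {v} (compSupp G U C) ≠ 0) : ∃ y ∈ compSupp G U C, G.Adj v y := by
  by_contra h
  push_neg at h
  apply hC
  rw [eB_eq_zero_iff]
  rintro x rfl y hy hadj
  exact h y hy hadj

lemma liftComp_eq_vComp {C : (G.induce U).ConnectedComponent}
    (hC : eB G {v} (compSupp G U C) ≠ 0) :
    liftComp G U v C = vComp G U v := by
  obtain ⟨y, hy, hadj⟩ := exists_adj_of_touch hC
  have hy' : y ∈ insert v U := Set.mem_insert_iff.mpr (Or.inr (compSupp_subset C hy))
  have h1 : (G.induce (insert v U)).connectedComponentMk ⟨y, hy'⟩ = liftComp G U v C :=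
    reachable_liftComp hy hy'
  have hadj' : (G.induce (insert v U)).Adj ⟨y, hy'⟩ ⟨v, Set.mem_insert v U⟩ := hadj.symm
  rw [← h1, vComp]
  exact ConnectedComponent.connectedComponentMk_eq_of_adj hadj'

lemma mem_compSupp_vComp : v ∈ compSupp G (insert v U) (vComp G U v) :=
  mem_compSupp.mpr ⟨Set.mem_insert v U, rfl⟩

lemma compSupp_vComp (hv : v ∉ U) :
    compSupp G (insert v U) (vComp G U v) =
      insert v (⋃ C ∈ Finset.univ.filter
        (fun C : (G.induce U).ConnectedComponent => eB G {v} (compSupp G U C) ≠ 0),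
        compSupp G U C) := by
  classical
  apply Set.Subset.antisymm
  · set T : Set V := insert v (⋃ C ∈ Finset.univ.filter
      (fun C : (G.induce U).ConnectedComponent => eB G {v} (compSupp G U C) ≠ 0),
      compSupp G U C) with hT
    set S : Set ↥(insert v U) := {z | (z : V) ∈ T} with hSdef
    have hclosed : ∀ ⦃x y : ↥(insert v U)⦄, x ∈ S → (G.induce (insert v U)).Adj x y → y ∈ S := by
      intro x y hx hadj
      have hGadj : G.Adj (x : V) (y : V) := hadj
      show (y : V) ∈ T
      rcases hx with hxv | hxC
      · rcases y.2 with hyv | hyU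
        · exact absurd (hxv.trans hyv.symm) hGadj.ne
        · have hadjvy : G.Adj v (y : V) := by rwa [hxv] at hGadj
          right
          rw [Set.mem_iUnion₂]
          refine ⟨(G.induce U).connectedComponentMk ⟨(y : V), hyU⟩, ?_, ?_⟩
          · rw [Finset.mem_filter]
            exact ⟨Finset.mem_univ _,
              eB_ne_zero_of_adj (Set.mem_singleton v)
                (mem_compSupp.mpr ⟨hyU, rfl⟩) hadjvy⟩
          · exact mem_compSupp.mpr ⟨hyU, rfl⟩
      · rw [Set.mem_iUnion₂] at hxC
        obtain ⟨C, hCf, hxc⟩ := hxC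
        rcases y.2 with hyv | hyU
        · left; exact hyv
        · obtain ⟨hxm, hxc'⟩ := mem_compSupp.mp hxc
          have : (G.induce U).Adj ⟨(x : V), hxm⟩ ⟨(y : V), hyU⟩ := hGadj
          have hmkeq := ConnectedComponent.connectedComponentMk_eq_of_adj this.symm
          right
          rw [Set.mem_iUnion₂]
          exact ⟨C, hCf, mem_compSupp.mpr ⟨hyU, by rw [hmkeq, hxc']⟩⟩
    have hvS : (⟨v, Set.mem_insert v U⟩ : ↥(insert v U)) ∈ S := Or.inl rfl
    rintro z ⟨⟨z', hz'⟩, hzm, rfl⟩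
    exact supp_subset_of_closed hclosed hvS hzm
  · intro y hy
    rcases hy with rfl | hy
    · exact mem_compSupp_vComp
    · rw [Set.mem_iUnion₂] at hy
      obtain ⟨C, hCf, hyc⟩ := hy
      rw [Finset.mem_filter] at hCf
      have hy' : y ∈ insert v U := Set.mem_insert_iff.mpr (Or.inr (compSupp_subset C hyc))
      exact mem_compSupp.mpr ⟨hy', by rw [reachable_liftComp hyc hy', liftComp_eq_vComp hCf.2]⟩

lemma comp_insert_cases (K : (G.induce (insert v U)).ConnectedComponent) :
    K = vComp G U v ∨ ∃ C : (G.induce U).ConnectedComponent,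
      eB G {v} (compSupp G U C) = 0 ∧ liftComp G U v C = K := by
  classical
  obtain ⟨⟨z, hz⟩, hmk⟩ := K.exists_rep
  rcases Set.mem_insert_iff.mp hz with hzv | hzU
  · left
    subst hzv
    exact hmk.symm
  · have hlift : liftComp G U v ((G.induce U).connectedComponentMk ⟨z, hzU⟩) = K := by
      rw [liftComp, ConnectedComponent.map_mk, ← hmk]
      rfl
    by_cases ht : eB G {v} (compSupp G U ((G.induce U).connectedComponentMk ⟨z, hzU⟩)) = 0
    · exact Or.inr ⟨_, ht, hlift⟩
    · left
      rw [← hlift]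
      exact liftComp_eq_vComp ht

lemma liftComp_inj (hv : v ∉ U) {C D : (G.induce U).ConnectedComponent}
    (hC : eB G {v} (compSupp G U C) = 0) (hD : eB G {v} (compSupp G U D) = 0)
    (h : liftComp G U v C = liftComp G U v D) : C = D := by
  by_contra hne
  obtain ⟨x, hx⟩ := compSupp_nonempty C
  have hx' : x ∈ compSupp G U D := by
    rw [← compSupp_liftComp hv hD, ← h, compSupp_liftComp hv hC]
    exact hx
  exact (compSupp_disjoint hne).le_bot ⟨hx, hx'⟩

lemma liftComp_ne_vComp (hv : v ∉ U) {C : (G.induce U).ConnectedComponent}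
    (hC : eB G {v} (compSupp G U C) = 0) :
    liftComp G U v C ≠ vComp G U v := by
  intro h
  have h2 : v ∈ compSupp G (insert v U) (vComp G U v) := mem_compSupp_vComp
  rw [← h, compSupp_liftComp hv hC] at h2
  exact hv (compSupp_subset C h2)

lemma card_odd_comps_insert (hv : v ∉ U) (B' : Set V) :
    Nat.card {K : (G.induce (insert v U)).ConnectedComponent //
        Odd (eB G (compSupp G (insert v U) K) B')} =
      (Finset.univ.filter (fun C : (G.induce U).ConnectedComponent =>
        eB G {v} (compSupp G U C) = 0 ∧ Odd (eB G (compSupp G U C) B'))).card +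
      (if Odd (eB G (compSupp G (insert v U) (vComp G U v)) B') then 1 else 0) := by
  classical
  rw [Nat.card_eq_fintype_card, Fintype.card_subtype]
  set P' : (G.induce (insert v U)).ConnectedComponent → Prop :=
    fun K => Odd (eB G (compSupp G (insert v U) K) B') with hP'
  set t := Finset.univ.filter (fun K => P' K ∧ K ≠ vComp G U v) with ht
  have hnm : vComp G U v ∉ t := by simp [ht]
  have hsplit : (Finset.univ.filter P').card = t.card + (if P' (vComp G U v) then 1 else 0) := by
    by_cases hvc : P' (vComp G U v)
    · rw [if_pos hvc]
      have hins : Finset.univ.filter P' = insert (vComp G U v) t := by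
        ext K
        simp only [Finset.mem_filter, Finset.mem_univ, true_and, Finset.mem_insert, ht]
        constructor
        · intro hK
          by_cases hKv : K = vComp G U v
          · exact Or.inl hKv
          · exact Or.inr ⟨hK, hKv⟩
        · rintro (rfl | ⟨hK, -⟩)
          · exact hvc
          · exact hK
      rw [hins, Finset.card_insert_of_notMem hnm]
    · rw [if_neg hvc]
      have heq : Finset.univ.filter P' = t := by
        ext K
        simp only [Finset.mem_filter, Finset.mem_univ, true_and, ht]
        exact ⟨fun hK => ⟨hK, fun hKv => hvc (hKv ▸ hK)⟩, fun h => h.1⟩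
      rw [heq, Nat.add_zero]
  have hcard : t.card = (Finset.univ.filter (fun C : (G.induce U).ConnectedComponent =>
      eB G {v} (compSupp G U C) = 0 ∧ Odd (eB G (compSupp G U C) B'))).card := by
    symm
    apply Finset.card_bij (fun (C : (G.induce U).ConnectedComponent) _ => liftComp G U v C)
    · intro C hC
      rw [Finset.mem_filter] at hC
      obtain ⟨-, hC0, hCodd⟩ := hC
      rw [ht, Finset.mem_filter]
      refine ⟨Finset.mem_univ _, ?_, liftComp_ne_vComp hv hC0⟩
      show Odd _
      rw [compSupp_liftComp hv hC0]
      exact hCodd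
    · intro C hC D hD h
      rw [Finset.mem_filter] at hC hD
      exact liftComp_inj hv hC.2.1 hD.2.1 h
    · intro K hK
      rw [ht, Finset.mem_filter] at hK
      obtain ⟨-, hKP, hKv⟩ := hK
      rcases comp_insert_cases K with rfl | ⟨C, hC0, hCK⟩
      · exact absurd rfl hKv
      · refine ⟨C, ?_, hCK⟩
        rw [Finset.mem_filter]
        refine ⟨Finset.mem_univ _, hC0, ?_⟩
        rw [← compSupp_liftComp hv hC0, hCK]
        exact hKP
  rw [hsplit, hcard]

end Surgery

section Step1
variable {V : Type*} [Fintype V] {G : SimpleGraph V} {A B : Set V}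

lemma deltaAB_eq (G : SimpleGraph V) (A B : Set V) :
    deltaAB G A B = 2 * A.ncard - 2 * B.ncard + eB G B Aᶜ -
      (Finset.univ.filter (fun C : (G.induce (A ∪ B)ᶜ).ConnectedComponent =>
        Odd (eB G (compSupp G (A ∪ B)ᶜ C) B))).card := by
  classical
  rw [deltaAB, Nat.card_eq_fintype_card, Fintype.card_subtype]

lemma card_subtype_congr {U₁ U₂ : Set V} (h : U₁ = U₂) (B' : Set V) :
    Nat.card {C : (G.induce U₁).ConnectedComponent // Odd (eB G (compSupp G U₁ C) B')} =
    Nat.card {C : (G.induce U₂).ConnectedComponent // Odd (eB G (compSupp G U₂ C) B')} := by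
  subst h; rfl

lemma step1 (hAB : IsBiasedBarrier G A B)
    (MA : ∀ C : (G.induce (A ∪ B)ᶜ).ConnectedComponent,
      Odd (eB G (compSupp G (A ∪ B)ᶜ C) B) → eB G (compSupp G (A ∪ B)ᶜ C) B = 1)
    {v : V} (hvB : v ∈ B) :
    eB G {v} (B \ {v}) = 0 ∧
    ∀ C : (G.induce (A ∪ B)ᶜ).ConnectedComponent,
      ¬ Odd (eB G (compSupp G (A ∪ B)ᶜ C) B) → eB G {v} (compSupp G (A ∪ B)ᶜ C) = 0 := by
  classical
  obtain ⟨⟨hdisj, hδ⟩, hopt⟩ := hAB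
  set U : Set V := (A ∪ B)ᶜ with hU
  set B' : Set V := B \ {v} with hB'
  have hvA : v ∉ A := fun h => (Set.disjoint_left.mp hdisj h) hvB
  have hvU : v ∉ U := fun h => h (Or.inr hvB)
  have hset : (A ∪ B')ᶜ = insert v U := by
    ext x
    simp only [hB', hU, Set.mem_compl_iff, Set.mem_union, Set.mem_diff,
      Set.mem_singleton_iff, Set.mem_insert_iff]
    by_cases hxv : x = v
    · subst hxv; simp [hvA, hvB]
    · simp [hxv]
  -- predicates
  set OddP : (G.induce U).ConnectedComponent → Prop :=
    fun C => Odd (eB G (compSupp G U C) B) with hOddP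
  set TouchP : (G.induce U).ConnectedComponent → Prop :=
    fun C => eB G {v} (compSupp G U C) ≠ 0 with hTouchP
  set f : (G.induce U).ConnectedComponent → ℕ :=
    fun C => eB G {v} (compSupp G U C) with hf
  set s1 := Finset.univ.filter (fun C => OddP C ∧ TouchP C) with hs1
  set s2 := Finset.univ.filter (fun C => OddP C ∧ ¬ TouchP C) with hs2
  set s3 := Finset.univ.filter (fun C => ¬ OddP C ∧ TouchP C) with hs3
  set s4 := Finset.univ.filter (fun C => ¬ OddP C ∧ ¬ TouchP C) with hs4
  -- basic split facts
  have hsplit_sum : ∀ g : (G.induce U).ConnectedComponent → ℕ,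
      ∑ C, g C = ∑ C ∈ s1, g C + ∑ C ∈ s2, g C + (∑ C ∈ s3, g C + ∑ C ∈ s4, g C) := by
    intro g
    rw [← Finset.sum_filter_add_sum_filter_not Finset.univ OddP g]
    congr 1
    · rw [← Finset.sum_filter_add_sum_filter_not (Finset.univ.filter OddP) TouchP g,
        Finset.filter_filter, Finset.filter_filter]
    · rw [← Finset.sum_filter_add_sum_filter_not (Finset.univ.filter (fun C => ¬ OddP C)) TouchP g,
        Finset.filter_filter, Finset.filter_filter]
  -- key component-edge facts
  have hcB : ∀ C : (G.induce U).ConnectedComponent,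
      eB G (compSupp G U C) B = eB G (compSupp G U C) B' + f C := by
    intro C
    have : B = B' ∪ {v} := by
      rw [hB', Set.diff_union_of_subset (Set.singleton_subset_iff.mpr hvB)]
    rw [this, eB_union_right (by simp [hB'] : Disjoint B' {v}), hf]
    congr 1
    exact eB_comm G (compSupp G U C) {v}
  have hs1e : ∀ C ∈ s1, f C = 1 ∧ eB G (compSupp G U C) B' = 0 := by
    intro C hC
    rw [hs1, Finset.mem_filter] at hC
    obtain ⟨-, hO, hT⟩ := hC
    have h1 : eB G (compSupp G U C) B = 1 := MA C hO
    have h2 := hcB C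
    have h3 : f C ≤ eB G (compSupp G U C) B := by
      rw [hf]
      calc eB G {v} (compSupp G U C) = eB G (compSupp G U C) {v} := eB_comm G _ _
        _ ≤ eB G (compSupp G U C) B := eB_mono_right (Set.singleton_subset_iff.mpr hvB)
    have h4 : f C ≠ 0 := hT
    omega
  -- degree decomposition
  have hAc : Aᶜ = B ∪ U := by
    ext x
    simp only [hU, Set.mem_compl_iff, Set.mem_union]
    constructor
    · intro hxA
      by_cases hxB : x ∈ B
      · exact Or.inl hxB
      · exact Or.inr (fun h => h.elim hxA hxB)
    · rintro (hxB | hxU)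
      · exact fun hA => Set.disjoint_left.mp hdisj hA hxB
      · exact fun hA => hxU (Or.inl hA)
  have hBU : Disjoint B U := by
    rw [Set.disjoint_left]
    intro x hxB hxU
    exact hxU (Or.inr hxB)
  have hd : eB G {v} Aᶜ = eB G {v} B' + (∑ C ∈ s1, f C + ∑ C ∈ s3, f C) := by
    rw [hAc, eB_union_right hBU]
    congr 1
    · have hBsplit : B = B' ∪ {v} := by
        rw [hB', Set.diff_union_of_subset (Set.singleton_subset_iff.mpr hvB)]
      rw [hBsplit, eB_union_right (by simp [hB'] : Disjoint B' {v}),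
        eB_self_singleton v B, Nat.add_zero]
    · rw [eB_eq_sum_comps, hsplit_sum f]
      have h2 : ∑ C ∈ s2, f C = 0 := by
        apply Finset.sum_eq_zero
        intro C hC
        rw [hs2, Finset.mem_filter] at hC
        have := hC.2.2
        rw [hTouchP] at this
        simpa [hf] using this
      have h4 : ∑ C ∈ s4, f C = 0 := by
        apply Finset.sum_eq_zero
        intro C hC
        rw [hs4, Finset.mem_filter] at hC
        have := hC.2.2
        rw [hTouchP] at this
        simpa [hf] using this
      omega
  -- sums over s2 s4 vanish; sum over s1 is its cardinality
  set a := s1.card with ha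
  set r := s2.card with hr
  set o := (Finset.univ.filter OddP).card with ho
  set m := ∑ C ∈ s3, f C with hm
  set e' := eB G {v} B' with he'
  have hs1sum : ∑ C ∈ s1, f C = a := by
    rw [Finset.sum_congr rfl (fun C hC => (hs1e C hC).1), Finset.sum_const, smul_eq_mul,
      mul_one, ha]
  have hoar : a + r = o := by
    rw [ho, ← Finset.card_filter_add_card_filter_not
      (s := Finset.univ.filter OddP) (p := TouchP), ha, hr, hs1, hs2,
      Finset.filter_filter, Finset.filter_filter]
  -- the Dhat component support & its edge count
  have hDsupp := compSupp_vComp (G := G) hvU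
  have hvnotX : v ∉ ⋃ C ∈ Finset.univ.filter
      (fun C : (G.induce U).ConnectedComponent => eB G {v} (compSupp G U C) ≠ 0),
      compSupp G U C := by
    intro h
    rw [Set.mem_iUnion₂] at h
    obtain ⟨C, -, hC⟩ := h
    exact hvU (compSupp_subset C hC)
  set eD := eB G (compSupp G (insert v U) (vComp G U v)) B' with heD
  have hfiltT : Finset.univ.filter
      (fun C : (G.induce U).ConnectedComponent => eB G {v} (compSupp G U C) ≠ 0) =
      Finset.univ.filter TouchP := rfl
  have hD : eD = e' + (∑ C ∈ s1, eB G (compSupp G U C) B' + ∑ C ∈ s3, eB G (compSupp G U C) B') := by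
    rw [heD, hDsupp, Set.insert_eq,
      eB_union_left (Set.disjoint_singleton_left.mpr hvnotX), he']
    congr 1
    rw [eB_comm, eB_biUnion_right _ _ (fun i _ j _ hij => compSupp_disjoint hij)]
    have hterm : ∀ C ∈ Finset.univ.filter TouchP,
        eB G B' (compSupp G U C) = eB G (compSupp G U C) B' :=
      fun C _ => eB_comm G B' (compSupp G U C)
    rw [hfiltT, Finset.sum_congr rfl hterm,
      ← Finset.sum_filter_add_sum_filter_not (Finset.univ.filter TouchP) OddP
        (fun C => eB G (compSupp G U C) B'),
      Finset.filter_filter, Finset.filter_filter]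
    congr 1
    · rw [hs1]
      exact Finset.sum_congr (Finset.filter_congr (fun C _ => and_comm)) (fun _ _ => rfl)
    · rw [hs3]
      exact Finset.sum_congr (Finset.filter_congr (fun C _ => and_comm)) (fun _ _ => rfl)
  have hsum1 : ∑ C ∈ s1, eB G (compSupp G U C) B' = 0 :=
    Finset.sum_eq_zero (fun C hC => (hs1e C hC).2)
  have hDm : eD + m = e' + ∑ C ∈ s3, eB G (compSupp G U C) B := by
    have hc : ∑ C ∈ s3, eB G (compSupp G U C) B
        = ∑ C ∈ s3, (eB G (compSupp G U C) B' + f C) :=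
      Finset.sum_congr rfl (fun C _ => hcB C)
    rw [hD, hsum1, hc, Finset.sum_add_distrib, ← hm]
    omega
  have hEeven : (∑ C ∈ s3, eB G (compSupp G U C) B) % 2 = 0 := by
    rw [← Nat.even_iff]
    apply Finset.even_sum
    intro C hC
    rw [hs3, Finset.mem_filter] at hC
    exact Nat.not_odd_iff_even.mp hC.2.1
  -- the filter appearing in the surgery count equals s2
  have hofilter : Finset.univ.filter
      (fun C : (G.induce U).ConnectedComponent => eB G {v} (compSupp G U C) = 0 ∧
        Odd (eB G (compSupp G U C) B')) = s2 := by
    rw [hs2]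
    apply Finset.filter_congr
    intro C _
    have h := hcB C
    constructor
    · rintro ⟨h0, hOdd⟩
      have hfc : f C = 0 := h0
      refine ⟨?_, fun ht => ht h0⟩
      show Odd (eB G (compSupp G U C) B)
      rw [h, hfc, Nat.add_zero]
      exact hOdd
    · rintro ⟨hOdd, hT⟩
      have h0 : eB G {v} (compSupp G U C) = 0 := not_not.mp hT
      refine ⟨h0, ?_⟩
      have hOdd' : Odd (eB G (compSupp G U C) B) := hOdd
      rw [h] at hOdd'
      have hfc : f C = 0 := h0
      rw [hfc, Nat.add_zero] at hOdd'
      exact hOdd'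
  -- main claim : e' + m = 0
  have hkey : e' + m = 0 := by
    by_contra hbad
    set i : ℕ := if Odd eD then 1 else 0 with hi
    have hi1 : i ≤ 1 := by rw [hi]; split <;> omega
    have hiodd : (e' + m) % 2 = 1 → i = 1 := by
      intro hodd
      rw [hi, if_pos]
      rw [Nat.odd_iff]
      omega
    have h2 : 2 ≤ e' + m + i := by
      rcases Nat.even_or_odd (e' + m) with he | ho2
      · have := Nat.even_iff.mp he
        omega
      · have h1 := hiodd (Nat.odd_iff.mp ho2)
        have h3 := Nat.odd_iff.mp ho2
        omega
    -- compute both deltas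
    have hδB : deltaAB G A B = 2 * A.ncard - 2 * B.ncard + eB G B Aᶜ - o := by
      rw [deltaAB_eq, ← hU]
    have hδB' : deltaAB G A B' = 2 * A.ncard - 2 * B'.ncard + eB G B' Aᶜ - (r + i) := by
      have hcards : Nat.card {C : (G.induce (A ∪ B')ᶜ).ConnectedComponent //
          Odd (eB G (compSupp G (A ∪ B')ᶜ C) B')} = r + i := by
        rw [card_subtype_congr hset B', card_odd_comps_insert hvU B', hofilter, ← heD,
          ← hi, ← hr]
      simp only [deltaAB]
      rw [hcards]
      push_cast
      ring
    have heBB : eB G B Aᶜ = eB G B' Aᶜ + eB G {v} Aᶜ := by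
      have hBsplit : B = B' ∪ {v} := by
        rw [hB', Set.diff_union_of_subset (Set.singleton_subset_iff.mpr hvB)]
      conv_lhs => rw [hBsplit]
      exact eB_union_left (by simp [hB'])
    have hdd : eB G {v} Aᶜ = e' + (a + m) := by
      rw [hd, hs1sum]
    have hB'card : B'.ncard = B.ncard - 1 := by
      rw [hB']
      exact Set.ncard_diff_singleton_of_mem hvB
    have hBpos : 1 ≤ B.ncard :=
      (Set.ncard_pos (Set.toFinite B)).mpr ⟨v, hvB⟩
    have hδ'le : deltaAB G A B' ≤ deltaAB G A B := by
      rw [hδB, hδB']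
      omega
    have hbar : IsBarrier G A B' := ⟨hdisj.mono_right Set.diff_subset, le_trans hδ'le hδ⟩
    have hBle := (hopt A B' hbar).2 rfl
    omega
  have he'0 : e' = 0 := by omega
  have hm0 : ∑ C ∈ s3, f C = 0 := by rw [← hm]; omega
  refine ⟨he'0, ?_⟩
  intro C hC
  by_contra hCne
  have hCs3 : C ∈ s3 := by
    rw [hs3, Finset.mem_filter]
    exact ⟨Finset.mem_univ _, hC, hCne⟩
  exact hCne (Finset.sum_eq_zero_iff.mp hm0 C hCs3)

/-- each vertex of `B` lies in its own component of `G - A` -/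
lemma step2 (hdisj : Disjoint A B)
    (MA : ∀ C : (G.induce (A ∪ B)ᶜ).ConnectedComponent,
      Odd (eB G (compSupp G (A ∪ B)ᶜ C) B) → eB G (compSupp G (A ∪ B)ᶜ C) B = 1)
    (h1 : ∀ v ∈ B, eB G {v} (B \ {v}) = 0)
    (h2 : ∀ v ∈ B, ∀ C : (G.induce (A ∪ B)ᶜ).ConnectedComponent,
      ¬ Odd (eB G (compSupp G (A ∪ B)ᶜ C) B) → eB G {v} (compSupp G (A ∪ B)ᶜ C) = 0) :
    B.ncard ≤ numComp G A := by
  classical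
  set U : Set V := (A ∪ B)ᶜ with hU
  have hBA : ∀ b ∈ B, b ∈ Aᶜ := fun b hb hA => Set.disjoint_left.mp hdisj hA hb
  set F : ↥B → (G.induce Aᶜ).ConnectedComponent :=
    fun b => (G.induce Aᶜ).connectedComponentMk ⟨b.1, hBA b.1 b.2⟩ with hF
  have hInj : Function.Injective F := by
    rintro ⟨u, huB⟩ ⟨w, hwB⟩ heq
    by_contra hne
    have hne' : u ≠ w := fun h => hne (Subtype.ext h)
    -- the closed set around w
    set S : Set ↥Aᶜ := {z | (z : V) = w ∨ ∃ C : (G.induce U).ConnectedComponent,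
      eB G {w} (compSupp G U C) ≠ 0 ∧ (z : V) ∈ compSupp G U C} with hSdef
    have hclosed : ∀ ⦃x y : ↥Aᶜ⦄, x ∈ S → (G.induce Aᶜ).Adj x y → y ∈ S := by
      intro x y hx hadj
      have hGadj : G.Adj (x : V) (y : V) := hadj
      have hyA : (y : V) ∈ Aᶜ := y.2
      show (y : V) = w ∨ _
      rcases hx with hxw | ⟨C, hTC, hxC⟩
      · -- x = w
        have hGwy : G.Adj w (y : V) := by rwa [hxw] at hGadj
        by_cases hyB : (y : V) ∈ B
        · exfalso
          have hyne : (y : V) ≠ w := fun h => hGwy.ne' h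
          exact eB_ne_zero_of_adj (Set.mem_singleton w) (⟨hyB, hyne⟩ :
            (y : V) ∈ B \ {w}) hGwy (h1 w hwB)
        · have hyU : (y : V) ∈ U := fun h => h.elim (fun hA => hyA hA) hyB
          right
          refine ⟨(G.induce U).connectedComponentMk ⟨(y : V), hyU⟩, ?_,
            mem_compSupp.mpr ⟨hyU, rfl⟩⟩
          exact eB_ne_zero_of_adj (Set.mem_singleton w)
            (mem_compSupp.mpr ⟨hyU, rfl⟩) hGwy
      · -- x in a component C touching w
        have hCodd : Odd (eB G (compSupp G U C) B) := by
          by_contra hCodd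
          exact hTC (h2 w hwB C hCodd)
        have hC1 : eB G (compSupp G U C) B = 1 := MA C hCodd
        have hCBw : eB G (compSupp G U C) (B \ {w}) = 0 := by
          have hBsplit : B = (B \ {w}) ∪ {w} := by
            rw [Set.diff_union_of_subset (Set.singleton_subset_iff.mpr hwB)]
          have := hC1
          rw [hBsplit, eB_union_right (by simp)] at this
          have hge : eB G (compSupp G U C) {w} ≠ 0 := by
            rw [eB_comm]
            exact hTC
          omega
        by_cases hyw : (y : V) = w
        · exact Or.inl hyw
        · by_cases hyB : (y : V) ∈ B
          · exfalso
            exact eB_ne_zero_of_adj hxC (⟨hyB, hyw⟩ : (y : V) ∈ B \ {w}) hGadj hCBw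
          · have hyU : (y : V) ∈ U := fun h => h.elim (fun hA => hyA hA) hyB
            obtain ⟨hxm, hxc⟩ := mem_compSupp.mp hxC
            have hadjU : (G.induce U).Adj ⟨(x : V), hxm⟩ ⟨(y : V), hyU⟩ := hGadj
            have hmk := ConnectedComponent.connectedComponentMk_eq_of_adj hadjU.symm
            right
            exact ⟨C, hTC, mem_compSupp.mpr ⟨hyU, by rw [hmk, hxc]⟩⟩
    have hwS : (⟨w, hBA w hwB⟩ : ↥Aᶜ) ∈ S := Or.inl rfl
    have huS : (⟨u, hBA u huB⟩ : ↥Aᶜ) ∈ S := by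
      apply supp_subset_of_closed hclosed hwS
      rw [ConnectedComponent.mem_supp_iff]
      exact heq
    rcases huS with h | ⟨C, -, hC⟩
    · exact hne' h
    · exact (compSupp_subset C hC) (Or.inr huB)
  calc B.ncard = Nat.card ↥B := (Nat.card_coe_set_eq B).symm
    _ ≤ numComp G A := Nat.card_le_card_of_injective F hInj

/-- `e(B, Aᶜ)` equals the number of odd components -/
lemma step3 (hdisj : Disjoint A B)
    (MA : ∀ C : (G.induce (A ∪ B)ᶜ).ConnectedComponent,
      Odd (eB G (compSupp G (A ∪ B)ᶜ C) B) → eB G (compSupp G (A ∪ B)ᶜ C) B = 1)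
    (h1 : ∀ v ∈ B, eB G {v} (B \ {v}) = 0)
    (h2 : ∀ v ∈ B, ∀ C : (G.induce (A ∪ B)ᶜ).ConnectedComponent,
      ¬ Odd (eB G (compSupp G (A ∪ B)ᶜ C) B) → eB G {v} (compSupp G (A ∪ B)ᶜ C) = 0) :
    eB G B Aᶜ = (Finset.univ.filter (fun C : (G.induce (A ∪ B)ᶜ).ConnectedComponent =>
      Odd (eB G (compSupp G (A ∪ B)ᶜ C) B))).card := by
  classical
  set U : Set V := (A ∪ B)ᶜ with hU
  have hAc : Aᶜ = B ∪ U := by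
    ext x
    simp only [hU, Set.mem_compl_iff, Set.mem_union]
    constructor
    · intro hxA
      by_cases hxB : x ∈ B
      · exact Or.inl hxB
      · exact Or.inr (fun h => h.elim hxA hxB)
    · rintro (hxB | hxU)
      · exact fun hA => Set.disjoint_left.mp hdisj hA hxB
      · exact fun hA => hxU (Or.inl hA)
  have hBU : Disjoint B U := by
    rw [Set.disjoint_left]
    intro x hxB hxU
    exact hxU (Or.inr hxB)
  have hBB : eB G B B = 0 := by
    rw [eB_eq_zero_iff]
    intro x hx y hy hadj
    exact eB_ne_zero_of_adj (Set.mem_singleton x) (⟨hy, hadj.ne'⟩ : y ∈ B \ {x}) hadj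
      (h1 x hx)
  have hterm : ∀ C : (G.induce U).ConnectedComponent,
      eB G B (compSupp G U C) =
        if Odd (eB G (compSupp G U C) B) then 1 else 0 := by
    intro C
    by_cases hO : Odd (eB G (compSupp G U C) B)
    · rw [if_pos hO, eB_comm]
      exact MA C hO
    · rw [if_neg hO, eB_eq_zero_iff]
      intro x hx y hy hadj
      exact eB_ne_zero_of_adj (Set.mem_singleton x) hy hadj (h2 x hx C hO)
  rw [hAc, eB_union_right hBU, hBB, Nat.zero_add, eB_eq_sum_comps,
    Finset.sum_congr rfl (fun C _ => hterm C), ← Finset.sum_filter,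
    Finset.sum_const, smul_eq_mul, mul_one]

end Step1


theorem stmt8 {V : Type*} [Fintype V] (G : SimpleGraph V) (A B : Set V)
    (htough : Tough 1 G) (hn : 3 ≤ Nat.card V)
    (hG : ¬ HasTwoFactor G) (hAB : IsBiasedBarrier G A B) :
    ∃ C : (G.induce (A ∪ B)ᶜ).ConnectedComponent,
      Odd (eB G (compSupp G (A ∪ B)ᶜ C) B) ∧ 3 ≤ eB G (compSupp G (A ∪ B)ᶜ C) B := by
  classical
  by_contra hgoal
  push_neg at hgoal
  have MA : ∀ C : (G.induce (A ∪ B)ᶜ).ConnectedComponent,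
      Odd (eB G (compSupp G (A ∪ B)ᶜ C) B) → eB G (compSupp G (A ∪ B)ᶜ C) B = 1 := by
    intro C hO
    have h3 := hgoal C hO
    have h4 := Nat.odd_iff.mp hO
    omega
  have h1 : ∀ v ∈ B, eB G {v} (B \ {v}) = 0 := fun v hv => (step1 hAB MA hv).1
  have h2 : ∀ v ∈ B, ∀ C : (G.induce (A ∪ B)ᶜ).ConnectedComponent,
      ¬ Odd (eB G (compSupp G (A ∪ B)ᶜ C) B) → eB G {v} (compSupp G (A ∪ B)ᶜ C) = 0 :=
    fun v hv => (step1 hAB MA hv).2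
  have hBcomp : B.ncard ≤ numComp G A := step2 hAB.1.1 MA h1 h2
  have heBo := step3 hAB.1.1 MA h1 h2
  have hABcard : A.ncard + 1 ≤ B.ncard := by
    have hδ' := hAB.1.2
    rw [deltaAB_eq, heBo] at hδ'
    omega
  by_cases hA : 1 ≤ A.ncard
  · -- main case
    have h2c : 2 ≤ numComp G A := le_trans (by omega) hBcomp
    have ht := htough A h2c
    rw [one_mul, Nat.cast_le] at ht
    omega
  · -- degenerate case : A = ∅
    have hA0 : A.ncard = 0 := by omega
    have hAe : A = ∅ := (Set.ncard_eq_zero (Set.toFinite A)).mp hA0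
    subst hAe
    have hno2 : ¬ 2 ≤ numComp G (∅ : Set V) := by
      intro h2c
      have ht := htough ∅ h2c
      rw [one_mul] at ht
      have h0 : (((∅ : Set V)).ncard : ℝ) = 0 := by simp
      rw [h0] at ht
      have h2r : (2 : ℝ) ≤ 0 := le_trans (by exact_mod_cast h2c) ht
      norm_num at h2r
    have hB1 : B.ncard = 1 := by omega
    obtain ⟨v, hBv⟩ := Set.ncard_eq_one.mp hB1
    subst hBv
    have hvB : v ∈ ({v} : Set V) := rfl
    have hUset : (((∅ : Set V)) ∪ {v})ᶜ = ({v}ᶜ : Set V) := by simp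
    rw [hUset] at MA h2
    -- every component of G - v is odd (and meets v in exactly one edge)
    have hallodd : ∀ C : (G.induce ({v}ᶜ : Set V)).ConnectedComponent,
        Odd (eB G (compSupp G ({v}ᶜ : Set V) C) {v}) := by
      intro C
      by_contra hO
      have h0 : eB G {v} (compSupp G ({v}ᶜ : Set V) C) = 0 := h2 v hvB C hO
      -- then C's support is closed in G, giving two components of G - ∅
      obtain ⟨x, hx⟩ := compSupp_nonempty C
      have hxmem : x ∈ ((∅ : Set V))ᶜ := fun h => h
      have hvmem : v ∈ ((∅ : Set V))ᶜ := fun h => h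
      set S : Set ↥((∅ : Set V))ᶜ := {z | (z : V) ∈ compSupp G ({v}ᶜ : Set V) C} with hS
      have hclosed : ∀ ⦃a b : ↥((∅ : Set V))ᶜ⦄, a ∈ S →
          (G.induce ((∅ : Set V))ᶜ).Adj a b → b ∈ S := by
        intro a b ha hadj
        have hGadj : G.Adj (a : V) (b : V) := hadj
        by_cases hbv : (b : V) = v
        · exfalso
          have hadj2 : G.Adj v (a : V) := by
            have h5 := hGadj.symm
            rwa [hbv] at h5
          exact eB_ne_zero_of_adj (Set.mem_singleton v) ha hadj2 h0
        · have haU : (a : V) ∈ ({v}ᶜ : Set V) := compSupp_subset C ha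
          have hbU : (b : V) ∈ ({v}ᶜ : Set V) := hbv
          obtain ⟨ham, hac⟩ := mem_compSupp.mp ha
          have hadjU : (G.induce ({v}ᶜ : Set V)).Adj ⟨(a : V), ham⟩ ⟨(b : V), hbU⟩ := hGadj
          have hmk := ConnectedComponent.connectedComponentMk_eq_of_adj hadjU.symm
          show (b : V) ∈ compSupp G ({v}ᶜ : Set V) C
          exact mem_compSupp.mpr ⟨hbU, by rw [hmk, hac]⟩
      have hne : (G.induce ((∅ : Set V))ᶜ).connectedComponentMk ⟨x, hxmem⟩ ≠
          (G.induce ((∅ : Set V))ᶜ).connectedComponentMk ⟨v, hvmem⟩ := by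
        intro heq
        have hv2 : (⟨v, hvmem⟩ : ↥((∅ : Set V))ᶜ) ∈
            ((G.induce ((∅ : Set V))ᶜ).connectedComponentMk ⟨x, hxmem⟩).supp := by
          rw [ConnectedComponent.mem_supp_iff]
          exact heq.symm
        have := supp_subset_of_closed hclosed (show (⟨x, hxmem⟩ : ↥((∅ : Set V))ᶜ) ∈ S from hx) hv2
        have hvU : v ∈ ({v}ᶜ : Set V) := compSupp_subset C this
        exact hvU rfl
      apply hno2
      rw [numComp, Nat.card_eq_fintype_card]
      exact Fintype.one_lt_card_iff_nontrivial.mpr ⟨_, _, hne⟩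
    -- case on the number of components of G - v
    have hnumv : numComp G {v} = Nat.card ((G.induce ({v}ᶜ : Set V)).ConnectedComponent) := rfl
    rcases Nat.lt_or_ge (Nat.card ((G.induce ({v}ᶜ : Set V)).ConnectedComponent)) 2 with hn2 | hn2
    · -- at most one component
      rcases Nat.lt_or_ge (Nat.card ((G.induce ({v}ᶜ : Set V)).ConnectedComponent)) 1 with hn0 | hn1
      · -- no component : V = {v}
        have h0 : Nat.card ((G.induce ({v}ᶜ : Set V)).ConnectedComponent) = 0 := by omega
        have hemp : IsEmpty ((G.induce ({v}ᶜ : Set V)).ConnectedComponent) := by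
          rcases Nat.card_eq_zero.mp h0 with h | h
          · exact h
          · exact absurd h (by exact fun hh => hh.not_finite (Finite.of_fintype _))
        have hUe : ({v}ᶜ : Set V) = ∅ := by
          rw [← iUnion_compSupp (G := G) (U := ({v}ᶜ : Set V))]
          exact Set.iUnion_of_empty _
        have huniv : (Set.univ : Set V) = {v} := by
          ext x
          simp only [Set.mem_univ, true_iff, Set.mem_singleton_iff]
          by_contra hxv
          have : x ∈ ({v}ᶜ : Set V) := hxv
          rw [hUe] at this
          exact this
        have : Nat.card V = 1 := by
          rw [← Set.ncard_univ, huniv, Set.ncard_singleton]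
        omega
      · -- exactly one component C₀
        have hn1' : Nat.card ((G.induce ({v}ᶜ : Set V)).ConnectedComponent) = 1 := by omega
        obtain ⟨hsub, hne⟩ := Nat.card_eq_one_iff_unique.mp hn1'
        obtain ⟨C₀⟩ := hne
        have hUC : ({v}ᶜ : Set V) = compSupp G ({v}ᶜ : Set V) C₀ := by
          apply Set.Subset.antisymm
          · intro x hx
            have hx2 : x ∈ ⋃ C, compSupp G ({v}ᶜ : Set V) C := by
              rw [iUnion_compSupp]; exact hx
            obtain ⟨C, hC⟩ := Set.mem_iUnion.mp hx2
            rwa [Subsingleton.elim C C₀] at hC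
          · exact compSupp_subset C₀
        have hC1 : eB G (compSupp G ({v}ᶜ : Set V) C₀) {v} = 1 := MA C₀ (hallodd C₀)
        rw [eB] at hC1
        obtain ⟨p₀, hp₀⟩ := Set.ncard_eq_one.mp hC1
        have hp₀mem : p₀ ∈ {p : V × V | p.1 ∈ compSupp G ({v}ᶜ : Set V) C₀ ∧ p.2 ∈ ({v} : Set V)
            ∧ G.Adj p.1 p.2} := by
          rw [hp₀]; rfl
        obtain ⟨hc1, hc2, hc3⟩ := hp₀mem
        set c := p₀.1 with hc
        have hp2 : p₀.2 = v := hc2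
        have hcadj : G.Adj c v := by rw [← hp2]; exact hc3
        have hcU : c ∈ ({v}ᶜ : Set V) := compSupp_subset C₀ hc1
        have huniq : ∀ y : V, G.Adj v y → y = c := by
          intro y hy
          have hyne : y ≠ v := hy.ne'
          have hyU : y ∈ ({v}ᶜ : Set V) := hyne
          have hysupp : y ∈ compSupp G ({v}ᶜ : Set V) C₀ := hUC ▸ hyU
          have : (y, v) ∈ {p : V × V | p.1 ∈ compSupp G ({v}ᶜ : Set V) C₀ ∧
              p.2 ∈ ({v} : Set V) ∧ G.Adj p.1 p.2} := ⟨hysupp, rfl, hy.symm⟩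
          rw [hp₀] at this
          have := Prod.ext_iff.mp this
          exact this.1
        have hvc : v ≠ c := fun h => hcU h.symm
        have hvmem : v ∈ ({c}ᶜ : Set V) := hvc
        have hclosed : ∀ ⦃a b : ↥({c}ᶜ : Set V)⦄, a ∈ {z : ↥({c}ᶜ : Set V) | (z : V) = v} →
            (G.induce ({c}ᶜ : Set V)).Adj a b → b ∈ {z : ↥({c}ᶜ : Set V) | (z : V) = v} := by
          intro a b ha hadj
          exfalso
          have hGadj : G.Adj (a : V) (b : V) := hadj
          have hav : (a : V) = v := ha
          have : G.Adj v (b : V) := by rwa [hav] at hGadj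
          exact b.2 (huniq _ this)
        have hw : ∃ w : V, w ≠ v ∧ w ≠ c := by
          by_contra h
          push_neg at h
          have hsub2 : (Set.univ : Set V) ⊆ {v, c} := by
            intro x _
            by_cases hxv : x = v
            · exact Or.inl hxv
            · exact Or.inr (h x hxv)
          have hcard := Set.ncard_le_ncard hsub2 (Set.toFinite _)
          rw [Set.ncard_univ] at hcard
          have hvc2 : ({v, c} : Set V).ncard ≤ 2 :=
            le_trans (Set.ncard_insert_le v {c}) (by simp)
          omega
        obtain ⟨w, hwv, hwc⟩ := hw
        have hwmem : w ∈ ({c}ᶜ : Set V) := hwc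
        have hne2 : (G.induce ({c}ᶜ : Set V)).connectedComponentMk ⟨w, hwmem⟩ ≠
            (G.induce ({c}ᶜ : Set V)).connectedComponentMk ⟨v, hvmem⟩ := by
          intro heq
          have hv2 : (⟨w, hwmem⟩ : ↥({c}ᶜ : Set V)) ∈
              ((G.induce ({c}ᶜ : Set V)).connectedComponentMk ⟨v, hvmem⟩).supp := by
            rw [ConnectedComponent.mem_supp_iff]
            exact heq
          have := supp_subset_of_closed hclosed rfl hv2
          exact hwv this
        have h2c : 2 ≤ numComp G {c} := by
          rw [numComp, Nat.card_eq_fintype_card]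
          exact Fintype.one_lt_card_iff_nontrivial.mpr ⟨_, _, hne2⟩
        have ht := htough {c} h2c
        rw [one_mul] at ht
        have h1c : (({c} : Set V).ncard : ℝ) = 1 := by simp
        rw [h1c] at ht
        have hle : numComp G {c} ≤ 1 := by exact_mod_cast ht
        omega
    · -- at least two components : cut {v}
      have h2c : 2 ≤ numComp G {v} := hn2
      have ht := htough {v} h2c
      rw [one_mul] at ht
      have h1c : (({v} : Set V).ncard : ℝ) = 1 := by simp
      rw [h1c] at ht
      have hle : numComp G {v} ≤ 1 := by exact_mod_cast ht
      omega
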